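/- Let m ≥ 3 be odd, q = 2cos(π/(2m)), and let n be odd. For f(x) = c(ε_1 x_1 x_2 + ε_2 x_3 x_4 + ⋯ + ε_{(n-1)/2} x_{n-2} x_{n-1} + ε x_n) with c = ⌊(m+1)/4⌋ and ε_i, ε ∈ {-1,1}, the normalized sum S(f,n,m) = 2^{-n} Σ_{x∈{-1,1}^n} x_1⋯x_n e^{2πi f(x)/m} satisfies |S(f,n,m)| = (q/2)^{(n+1)/2}. -/

import Mathlib

noncomputable def Efun (m c : ℕ) (T : ℤ) : ℂ :=
  Complex.exp (2 * (Real.pi : ℂ) * Complex.I * ((((c : ℕ) : ℤ) * T : ℤ) : ℂ) / m)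

lemma Efun_sum_add (m c : ℕ) (k : ℕ) (A : Fin k → ℤ) (a : ℤ) :
    Complex.exp (2 * (Real.pi : ℂ) * Complex.I *
        ((((c : ℕ) : ℤ) * (∑ i, A i + a) : ℤ) : ℂ) / m)
      = (∏ i, Efun m c (A i)) * Efun m c a := by
  have hterm : ∀ T : ℤ, 2 * (Real.pi : ℂ) * Complex.I * ((((c : ℕ) : ℤ) * T : ℤ) : ℂ) / m
      = (2 * (Real.pi : ℂ) * Complex.I * (c : ℂ) / m) * (T : ℂ) := by
    intro T; push_cast; ring
  simp only [Efun, hterm]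
  rw [← Complex.exp_sum, ← Complex.exp_add]
  congr 1
  push_cast
  rw [mul_add, Finset.mul_sum]

lemma Efun_pair_sum (m c : ℕ) (e : ℤ) :
    ∑ q : Bool × Bool, ((if q.1 then (1 : ℂ) else -1) * (if q.2 then (1 : ℂ) else -1)) *
        Efun m c (e * (if q.1 then (1 : ℤ) else -1) * (if q.2 then (1 : ℤ) else -1))
      = 2 * (Efun m c e - Efun m c (-e)) := by
  rw [Fintype.sum_prod_type]
  simp
  ring

lemma Efun_single_sum (m c : ℕ) (e : ℤ) :
    ∑ b : Bool, (if b then (1 : ℂ) else -1) * Efun m c (e * (if b then (1 : ℤ) else -1))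
      = Efun m c e - Efun m c (-e) := by
  simp
  ring



lemma sin_val (m : ℕ) (hm : 3 ≤ m) (hodd : Odd m) :
    Real.sin (2 * Real.pi * (((m + 1) / 4 : ℕ) : ℝ) / m) = Real.cos (Real.pi / (2 * m)) := by
  have hm0 : (m : ℝ) ≠ 0 := by positivity
  rcases Nat.odd_mod_four_iff.mp (Nat.odd_iff.mp hodd) with h | h
  · obtain ⟨j, hj⟩ : ∃ j, m = 4 * j + 1 := ⟨m / 4, by omega⟩
    have hc : (m + 1) / 4 = j := by omega
    have : 2 * Real.pi * (((m + 1) / 4 : ℕ) : ℝ) / m = Real.pi / 2 - Real.pi / (2 * m) := by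
      rw [hc]
      have : (m : ℝ) = 4 * j + 1 := by exact_mod_cast congrArg (Nat.cast : ℕ → ℝ) hj
      field_simp
      rw [this]; ring
    rw [this, Real.sin_pi_div_two_sub]
  · obtain ⟨j, hj⟩ : ∃ j, m = 4 * j + 3 := ⟨m / 4, by omega⟩
    have hc : (m + 1) / 4 = j + 1 := by omega
    have : 2 * Real.pi * (((m + 1) / 4 : ℕ) : ℝ) / m = Real.pi / 2 + Real.pi / (2 * m) := by
      rw [hc]
      have : (m : ℝ) = 4 * j + 3 := by exact_mod_cast congrArg (Nat.cast : ℕ → ℝ) hj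
      push_cast
      field_simp
      rw [this]; ring
    rw [this, Real.sin_add, Real.sin_pi_div_two, Real.cos_pi_div_two]
    ring

lemma abs_Efun_sub (m : ℕ) (hm : 3 ≤ m) (hodd : Odd m) (e : ℤ) (he : e = 1 ∨ e = -1) :
    ‖Efun m ((m + 1) / 4) e - Efun m ((m + 1) / 4) (-e)‖
      = 2 * Real.cos (Real.pi / (2 * m)) := by
  have hcos : 0 ≤ Real.cos (Real.pi / (2 * m)) := by
    apply Real.cos_nonneg_of_mem_Icc
    constructor
    · have h1 : (0:ℝ) ≤ Real.pi / (2 * m) := by positivity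
      have := Real.pi_pos; linarith
    · rw [div_le_div_iff₀ (by positivity) (by norm_num)]
      have h3 : (3:ℝ) ≤ m := by exact_mod_cast hm
      nlinarith [Real.pi_pos]
  have main : ‖Efun m ((m + 1) / 4) 1 - Efun m ((m + 1) / 4) (-1)‖
      = 2 * Real.cos (Real.pi / (2 * m)) := by
    obtain ⟨c, hc⟩ : ∃ c : ℕ, (m + 1) / 4 = c := ⟨_, rfl⟩
    have hsv : Real.sin (2 * Real.pi * (c : ℝ) / m) = Real.cos (Real.pi / (2 * m)) := by
      rw [← hc]; exact sin_val m hm hodd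
    rw [hc]
    set φ : ℝ := 2 * Real.pi * (c : ℝ) / m with hφ
    have h1 : Efun m c 1 = Complex.exp ((φ : ℂ) * Complex.I) := by
      unfold Efun; congr 1; rw [hφ]; push_cast; ring
    have h2 : Efun m c (-1) = Complex.exp (((-φ : ℝ) : ℂ) * Complex.I) := by
      unfold Efun; congr 1; rw [hφ]; push_cast; ring
    rw [h1, h2, Complex.exp_mul_I, Complex.exp_mul_I]
    have : Complex.cos φ + Complex.sin φ * Complex.I -
        (Complex.cos ((-φ : ℝ) : ℂ) + Complex.sin ((-φ : ℝ) : ℂ) * Complex.I)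
        = 2 * Complex.sin (φ : ℂ) * Complex.I := by
      push_cast
      rw [Complex.cos_neg, Complex.sin_neg]; ring
    rw [this, norm_mul, norm_mul, Complex.norm_I, ← Complex.ofReal_sin, Complex.norm_real,
      Real.norm_eq_abs, Complex.norm_two, mul_one, hφ, hsv, abs_of_nonneg hcos]
  rcases he with rfl | rfl
  · exact main
  · rw [norm_sub_rev, neg_neg]; exact main

open Finset in
lemma prod_range_pair {M : Type*} [CommMonoid M] (g : ℕ → M) (k : ℕ) :
    ∏ j ∈ Finset.range (2 * k), g j = ∏ i ∈ Finset.range k, (g (2 * i) * g (2 * i + 1)) := by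
  induction k with
  | zero => simp
  | succ n ih =>
    have h : 2 * (n + 1) = 2 * n + 1 + 1 := by ring
    rw [h, Finset.prod_range_succ, Finset.prod_range_succ, Finset.prod_range_succ, ih, mul_assoc]

lemma prod_split {M : Type*} [CommMonoid M] (k : ℕ) (f : Fin (2 * k + 1) → M) :
    ∏ j, f j = (∏ i : Fin k, f ⟨2 * i.1, by omega⟩ * f ⟨2 * i.1 + 1, by omega⟩)
      * f ⟨2 * k, by omega⟩ := by
  classical
  set F : ℕ → M := fun j => if h : j < 2 * k + 1 then f ⟨j, h⟩ else 1 with hF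
  have h0 : ∏ j, f j = ∏ j ∈ Finset.range (2 * k + 1), F j := by
    rw [← Fin.prod_univ_eq_prod_range]
    exact Finset.prod_congr rfl fun j _ => by simp only [hF, dif_pos j.isLt, Fin.eta]
  rw [h0, Finset.prod_range_succ, prod_range_pair]
  congr 1
  · rw [← Fin.prod_univ_eq_prod_range (fun i => F (2 * i) * F (2 * i + 1))]
    refine Finset.prod_congr rfl fun i _ => ?_
    have h1 : 2 * i.1 < 2 * k + 1 := by omega
    have h2 : 2 * i.1 + 1 < 2 * k + 1 := by omega
    simp only [hF, dif_pos h1, dif_pos h2]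
  · simp [hF]



section Bij
variable (k : ℕ)

def emap (p : (Fin k → Bool × Bool) × Bool) (j : Fin (2 * k + 1)) : Bool :=
  if h : (j : ℕ) < 2 * k then
    (if (j : ℕ) % 2 = 0 then (p.1 ⟨(j : ℕ) / 2, by omega⟩).1 else (p.1 ⟨(j : ℕ) / 2, by omega⟩).2)
  else p.2

lemma emap_e1 (p : (Fin k → Bool × Bool) × Bool) (i : Fin k) :
    emap k p ⟨2 * i.1, by omega⟩ = (p.1 i).1 := by
  have h1 : 2 * i.1 < 2 * k := by omega
  simp only [emap, dif_pos h1]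
  rw [if_pos (by omega)]
  have hidx : (⟨2 * i.1 / 2, by omega⟩ : Fin k) = i := Fin.ext (by show 2 * i.1 / 2 = i.1; omega)
  rw [hidx]

lemma emap_e2 (p : (Fin k → Bool × Bool) × Bool) (i : Fin k) :
    emap k p ⟨2 * i.1 + 1, by omega⟩ = (p.1 i).2 := by
  have h1 : 2 * i.1 + 1 < 2 * k := by omega
  simp only [emap, dif_pos h1]
  rw [if_neg (by omega)]
  have hidx : (⟨(2 * i.1 + 1) / 2, by omega⟩ : Fin k) = i :=
    Fin.ext (by show (2 * i.1 + 1) / 2 = i.1; omega)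
  rw [hidx]

lemma emap_e3 (p : (Fin k → Bool × Bool) × Bool) :
    emap k p ⟨2 * k, by omega⟩ = p.2 := by
  simp [emap]

lemma emap_bijective : Function.Bijective (emap k) := by
  rw [Function.bijective_iff_has_inverse]
  refine ⟨fun x => (fun i => (x ⟨2 * i.1, by omega⟩, x ⟨2 * i.1 + 1, by omega⟩), x ⟨2 * k, by omega⟩), ?_, ?_⟩
  · intro p
    refine Prod.ext ?_ ?_
    · funext i
      refine Prod.ext ?_ ?_
      · exact emap_e1 k p i
      · exact emap_e2 k p i
    · exact emap_e3 k p
  · intro x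
    funext j
    by_cases h : (j : ℕ) < 2 * k
    · by_cases hp : (j : ℕ) % 2 = 0
      · simp only [emap, dif_pos h, if_pos hp]
        congr 1
        exact Fin.ext (by show 2 * ((j : ℕ) / 2) = (j : ℕ); omega)
      · simp only [emap, dif_pos h, if_neg hp]
        congr 1
        exact Fin.ext (by show 2 * ((j : ℕ) / 2) + 1 = (j : ℕ); omega)
    · simp only [emap, dif_neg h]
      congr 1
      have hj := j.isLt
      exact Fin.ext (by show 2 * k = (j : ℕ); omega)

end Bij


theorem stmt_14 (m : ℕ) (hm : 3 ≤ m) (hodd : Odd m) (k : ℕ)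
    (ε : Fin k → ℤ) (hε : ∀ i, ε i = 1 ∨ ε i = -1) (ε₀ : ℤ) (hε₀ : ε₀ = 1 ∨ ε₀ = -1) :
    ‖((1 / 2 ^ (2 * k + 1)) * ∑ x : Fin (2 * k + 1) → Bool,
        (∏ i, (if x i then (1 : ℂ) else -1)) *
          Complex.exp (2 * (Real.pi : ℂ) * Complex.I *
            (((((m + 1) / 4 : ℕ) : ℤ) *
                ((∑ i : Fin k,
                    ε i * (if x ⟨2 * i.val, by omega⟩ then (1 : ℤ) else -1) *
                      (if x ⟨2 * i.val + 1, by omega⟩ then (1 : ℤ) else -1)) +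
                  ε₀ * (if x ⟨2 * k, by omega⟩ then (1 : ℤ) else -1)) : ℤ) : ℂ) / (m : ℂ)))‖
      = (2 * Real.cos (Real.pi / (2 * m)) / 2) ^ (k + 1) := by
  classical
  have hsum : (∑ x : Fin (2 * k + 1) → Bool,
        (∏ i, (if x i then (1 : ℂ) else -1)) *
          Complex.exp (2 * (Real.pi : ℂ) * Complex.I *
            (((((m + 1) / 4 : ℕ) : ℤ) *
                ((∑ i : Fin k,
                    ε i * (if x ⟨2 * i.val, by omega⟩ then (1 : ℤ) else -1) *
                      (if x ⟨2 * i.val + 1, by omega⟩ then (1 : ℤ) else -1)) +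
                  ε₀ * (if x ⟨2 * k, by omega⟩ then (1 : ℤ) else -1)) : ℤ) : ℂ) / (m : ℂ)))
      = (∏ i : Fin k, (2 * (Efun m ((m + 1) / 4) (ε i) - Efun m ((m + 1) / 4) (-(ε i))))) *
        (Efun m ((m + 1) / 4) ε₀ - Efun m ((m + 1) / 4) (-ε₀)) := by
    have h1 := Fintype.sum_bijective (emap k) (emap_bijective k)
      (fun p => (∏ i, (if emap k p i then (1 : ℂ) else -1)) *
          Complex.exp (2 * (Real.pi : ℂ) * Complex.I *
            (((((m + 1) / 4 : ℕ) : ℤ) *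
                ((∑ i : Fin k,
                    ε i * (if emap k p ⟨2 * i.val, by omega⟩ then (1 : ℤ) else -1) *
                      (if emap k p ⟨2 * i.val + 1, by omega⟩ then (1 : ℤ) else -1)) +
                  ε₀ * (if emap k p ⟨2 * k, by omega⟩ then (1 : ℤ) else -1)) : ℤ) : ℂ) / (m : ℂ)))
      (fun x => (∏ i, (if x i then (1 : ℂ) else -1)) *
          Complex.exp (2 * (Real.pi : ℂ) * Complex.I *
            (((((m + 1) / 4 : ℕ) : ℤ) *
                ((∑ i : Fin k,
                    ε i * (if x ⟨2 * i.val, by omega⟩ then (1 : ℤ) else -1) *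
                      (if x ⟨2 * i.val + 1, by omega⟩ then (1 : ℤ) else -1)) +
                  ε₀ * (if x ⟨2 * k, by omega⟩ then (1 : ℤ) else -1)) : ℤ) : ℂ) / (m : ℂ)))
      (fun p => rfl)
    rw [← h1]
    trans ∑ p : (Fin k → Bool × Bool) × Bool,
        ((∏ i : Fin k, (((if (p.1 i).1 then (1 : ℂ) else -1) * (if (p.1 i).2 then (1 : ℂ) else -1)) *
            Efun m ((m + 1) / 4)
              (ε i * (if (p.1 i).1 then (1 : ℤ) else -1) * (if (p.1 i).2 then (1 : ℤ) else -1)))) *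
          ((if p.2 then (1 : ℂ) else -1) *
            Efun m ((m + 1) / 4) (ε₀ * (if p.2 then (1 : ℤ) else -1))))
    · refine Finset.sum_congr rfl fun p _ => ?_
      beta_reduce
      rw [prod_split k (fun j => if emap k p j then (1 : ℂ) else -1)]
      simp only [emap_e1, emap_e2, emap_e3]
      rw [Efun_sum_add]
      simp only [Finset.prod_mul_distrib]
      ring
    · rw [Fintype.sum_prod_type]
      dsimp only
      refine Eq.trans (Finset.sum_congr rfl fun y _ => (Finset.mul_sum Finset.univ (fun y_1 : Bool => ((if y_1 then (1 : ℂ) else -1) *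
          Efun m ((m + 1) / 4) (ε₀ * (if y_1 then (1 : ℤ) else -1)))) _).symm) ?_
      rw [← Finset.sum_mul]
      congr 1
      · rw [← Fintype.piFinset_univ]
        have hpi := Finset.prod_univ_sum (fun _ : Fin k => (Finset.univ : Finset (Bool × Bool)))
          (fun i q => ((if q.1 then (1 : ℂ) else -1) * (if q.2 then (1 : ℂ) else -1)) *
            Efun m ((m + 1) / 4)
              (ε i * (if q.1 then (1 : ℤ) else -1) * (if q.2 then (1 : ℤ) else -1)))
        rw [← hpi]
        exact Finset.prod_congr rfl fun i _ => Efun_pair_sum m ((m + 1) / 4) (ε i)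
      · exact Efun_single_sum m ((m + 1) / 4) ε₀
  rw [hsum]
  have habs : ∀ i : Fin k,
      ‖2 * (Efun m ((m + 1) / 4) (ε i) - Efun m ((m + 1) / 4) (-(ε i)))‖
        = 2 * (2 * Real.cos (Real.pi / (2 * m))) := fun i => by
    rw [norm_mul, Complex.norm_two, abs_Efun_sub m hm hodd (ε i) (hε i)]
  rw [norm_mul, norm_mul, norm_prod]
  simp only [habs]
  rw [abs_Efun_sub m hm hodd ε₀ hε₀]
  have hc0 : ‖(1 / 2 ^ (2 * k + 1) : ℂ)‖ = 1 / 2 ^ (2 * k + 1) := by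
    rw [norm_div, norm_one, norm_pow, Complex.norm_two]
  rw [hc0, Finset.prod_const, Finset.card_univ, Fintype.card_fin]
  set x := Real.cos (Real.pi / (2 * m)) with hx
  have h2 : (2 : ℝ) ^ (2 * k + 1) = 2 * 4 ^ k := by
    rw [pow_succ, pow_mul]; ring
  rw [show (2 : ℝ) * (2 * x) = 4 * x by ring, mul_pow,
    show (2 : ℝ) * x / 2 = x by ring, h2, pow_succ]
  have h4 : (4 : ℝ) ^ k ≠ 0 := by positivity
  field_simp
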